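/- arXiv:1909.10700 — 3 statements merged into one kernel-verified Lean document; each statement's English description precedes it below -/
import Mathlib

section
/- Let f(r, M) = rᵀ M⁻¹ r + ln|M| for r ∈ ℝᵐ and M symmetric positive definite. Suppose there exists α > 0 such that for every feasible (r, M) with eigendecomposition M = X diag(λ) Xᵀ and r̃ = Xᵀr, one has min_i max(|r̃ᵢ|, λᵢ) ≥ α. Then f is coercive on the feasible set: if ‖r‖² + ‖M‖_F² → ∞ then f(r, M) → ∞. -/
open Matrix BigOperators

private lemma aux_log_ineq (x l : ℝ) (hx : 0 < x) (hl : 0 < l) :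
    1 + Real.log x ≤ x / l + Real.log l := by
  have h := Real.log_le_sub_one_of_pos (show 0 < x / l from div_pos hx hl)
  rw [Real.log_div hx.ne' hl.ne'] at h
  linarith

/-- Coercivity of `f(r, M) = rᵀ M⁻¹ r + ln det M` on a feasible set on which the
uniform eigenvalue/residual lower bound `min_i max(|r̃ᵢ|, λᵢ) ≥ α > 0` holds:
if `‖r‖² + ‖M‖_F² → ∞` then `f(r, M) → ∞`. -/
theorem stmt2 (m : ℕ) (F : Set ((Fin m → ℝ) × Matrix (Fin m) (Fin m) ℝ))
    (hPD : ∀ p ∈ F, p.2.PosDef)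
    (α : ℝ) (hα : 0 < α)
    (hbound : ∀ p ∈ F, ∀ (X : Matrix (Fin m) (Fin m) ℝ) (lam : Fin m → ℝ),
      Xᵀ * X = 1 → X * Xᵀ = 1 → p.2 = X * Matrix.diagonal lam * Xᵀ →
      ∀ i, α ≤ max |(Xᵀ *ᵥ p.1) i| (lam i)) :
    ∀ c : ℝ, ∃ R : ℝ, ∀ p ∈ F,
      R < (∑ i, p.1 i ^ 2) + (∑ i, ∑ j, p.2 i j ^ 2) →
      c ≤ p.1 ⬝ᵥ (p.2⁻¹ *ᵥ p.1) + Real.log p.2.det := by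
  intro c
  set β : ℝ := min (min (Real.log α) (1 + 2 * Real.log α)) 0 with hβdef
  have hβ0 : β ≤ 0 := min_le_right _ _
  set T : ℝ := 2 * max (Real.exp (2 * (c - m * β))) (Real.exp (c - m * β - 1)) with hTdef
  refine ⟨m * T, ?_⟩
  intro p hp hR
  rcases Nat.eq_zero_or_pos m with hm | hm
  · exfalso
    subst hm
    simp only [Finset.univ_eq_empty, Finset.sum_empty, add_zero, Nat.cast_zero, zero_mul] at hR
    exact lt_irrefl 0 hR
  have hm' : (0:ℝ) < m := by exact_mod_cast hm
  have hpd := hPD p hp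
  have hH := hpd.isHermitian
  set X : Matrix (Fin m) (Fin m) ℝ := ↑hH.eigenvectorUnitary with hXdef
  set lam := hH.eigenvalues with hlamdef
  have h1 : star X = Xᵀ := by ext i j; simp [Matrix.conjTranspose_apply]
  have hXX : Xᵀ * X = 1 := by
    rw [← h1]; exact Unitary.coe_star_mul_self hH.eigenvectorUnitary
  have hXXt : X * Xᵀ = 1 := by
    rw [← h1]; exact Unitary.coe_mul_star_self hH.eigenvectorUnitary
  have hspec : p.2 = X * Matrix.diagonal lam * Xᵀ := by
    have := hH.spectral_theorem
    simpa [← h1] using this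
  set s := Xᵀ *ᵥ p.1 with hsdef
  have hlampos : ∀ i, 0 < lam i := fun i => hpd.eigenvalues_pos i
  have hb := hbound p hp X lam hXX hXXt hspec
  -- inverse
  have hinv : p.2⁻¹ = X * Matrix.diagonal (fun i => (lam i)⁻¹) * Xᵀ := by
    apply Matrix.inv_eq_right_inv
    rw [hspec]
    have : X * Matrix.diagonal lam * Xᵀ * (X * Matrix.diagonal (fun i => (lam i)⁻¹) * Xᵀ)
        = X * (Matrix.diagonal lam * (Xᵀ * X) * Matrix.diagonal (fun i => (lam i)⁻¹)) * Xᵀ := by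
      simp only [mul_assoc]
    rw [this, hXX, mul_one, Matrix.diagonal_mul_diagonal]
    have hd : (fun i => lam i * (lam i)⁻¹) = fun _ : Fin m => (1:ℝ) := by
      funext i; exact mul_inv_cancel₀ (hlampos i).ne'
    rw [hd, Matrix.diagonal_one, mul_one, hXXt]
  -- quadratic form
  have hquad : p.1 ⬝ᵥ (p.2⁻¹ *ᵥ p.1) = ∑ i, s i ^ 2 / lam i := by
    rw [hinv]
    rw [← Matrix.mulVec_mulVec, ← Matrix.mulVec_mulVec]
    rw [Matrix.dotProduct_mulVec, ← Matrix.mulVec_transpose, ← hsdef]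
    simp only [dotProduct, Matrix.mulVec_diagonal]
    refine Finset.sum_congr rfl fun i _ => ?_
    field_simp
  -- log det
  have hlogdet : Real.log p.2.det = ∑ i, Real.log (lam i) := by
    have hdet : p.2.det = ∏ i, lam i := by simpa using hH.det_eq_prod_eigenvalues
    rw [hdet, Real.log_prod (fun i _ => (hlampos i).ne')]
  -- norm of r preserved
  have hr2 : ∑ i, p.1 i ^ 2 = ∑ i, s i ^ 2 := by
    have h1' : ∑ i, s i ^ 2 = s ⬝ᵥ s := by
      simp [dotProduct, sq]
    have h2' : s ⬝ᵥ s = p.1 ⬝ᵥ p.1 := by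
      rw [hsdef, Matrix.dotProduct_mulVec, Matrix.vecMul_transpose,
        Matrix.mulVec_mulVec, hXXt, Matrix.one_mulVec]
    have h3' : ∑ i, p.1 i ^ 2 = p.1 ⬝ᵥ p.1 := by simp [dotProduct, sq]
    rw [h3', ← h2', h1']
  -- Frobenius norm of M equals sum of squared eigenvalues
  have hM2 : ∑ i, ∑ j, p.2 i j ^ 2 = ∑ i, lam i ^ 2 := by
    have hsym : p.2ᵀ = p.2 := by
      have := hH.eq
      simpa [← h1] using this
    have htr : ∑ i, ∑ j, p.2 i j ^ 2 = Matrix.trace (p.2 * p.2) := by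
      simp only [Matrix.trace, Matrix.diag, Matrix.mul_apply]
      refine Finset.sum_congr rfl fun i _ => Finset.sum_congr rfl fun j _ => ?_
      rw [Matrix.IsSymm.apply hsym i j, sq]
    have hmm : p.2 * p.2 = X * Matrix.diagonal (fun i => lam i * lam i) * Xᵀ := by
      rw [hspec]
      have : X * Matrix.diagonal lam * Xᵀ * (X * Matrix.diagonal lam * Xᵀ)
          = X * (Matrix.diagonal lam * (Xᵀ * X) * Matrix.diagonal lam) * Xᵀ := by
        simp only [mul_assoc]
      rw [this, hXX, mul_one, Matrix.diagonal_mul_diagonal]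
    rw [htr, hmm, Matrix.trace_mul_cycle, hXX, one_mul, Matrix.trace_diagonal]
    exact Finset.sum_congr rfl fun i _ => (sq (lam i)).symm
  -- per-term lower bound
  have hterm : ∀ i, β ≤ s i ^ 2 / lam i + Real.log (lam i) := by
    intro i
    have hdiv : 0 ≤ s i ^ 2 / lam i := div_nonneg (sq_nonneg _) (hlampos i).le
    rcases le_max_iff.mp (hb i) with hs | hl
    · -- α ≤ |s i|
      have hx : α ^ 2 ≤ s i ^ 2 := by
        rw [← sq_abs (s i)]
        exact pow_le_pow_left₀ hα.le hs 2
      have hxpos : 0 < s i ^ 2 := lt_of_lt_of_le (pow_pos hα 2) hx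
      have haux := aux_log_ineq (s i ^ 2) (lam i) hxpos (hlampos i)
      have hlog : 2 * Real.log α ≤ Real.log (s i ^ 2) := by
        calc 2 * Real.log α = Real.log (α ^ 2) := by
              rw [Real.log_pow]; push_cast; ring
          _ ≤ Real.log (s i ^ 2) := Real.log_le_log (pow_pos hα 2) hx
      have : β ≤ 1 + 2 * Real.log α := le_trans (min_le_left _ _) (min_le_right _ _)
      linarith
    · -- α ≤ lam i
      have hlog : Real.log α ≤ Real.log (lam i) := Real.log_le_log hα hl
      have : β ≤ Real.log α := le_trans (min_le_left _ _) (min_le_left _ _)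
      linarith
  -- find a big coordinate
  have hbig : ∃ i, T < s i ^ 2 + lam i ^ 2 := by
    by_contra hcon
    push_neg at hcon
    have hsum : ∑ i, (s i ^ 2 + lam i ^ 2) ≤ m * T := by
      calc ∑ i, (s i ^ 2 + lam i ^ 2) ≤ ∑ _i : Fin m, T :=
            Finset.sum_le_sum fun i _ => hcon i
        _ = m * T := by simp [mul_comm]
    rw [hr2, hM2] at hR
    rw [Finset.sum_add_distrib] at hsum
    linarith
  obtain ⟨i₀, hi₀⟩ := hbig
  -- the big coordinate term dominates
  have hbigterm : c - m * β ≤ s i₀ ^ 2 / lam i₀ + Real.log (lam i₀) := by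
    have hcase : Real.exp (2 * (c - m * β)) < lam i₀ ^ 2 ∨
        Real.exp (c - m * β - 1) < s i₀ ^ 2 := by
      rcases lt_or_ge (Real.exp (2 * (c - m * β))) (lam i₀ ^ 2) with h | h
      · exact Or.inl h
      rcases lt_or_ge (Real.exp (c - m * β - 1)) (s i₀ ^ 2) with h' | h'
      · exact Or.inr h'
      exfalso
      have h1' : s i₀ ^ 2 + lam i₀ ^ 2 ≤
          Real.exp (c - m * β - 1) + Real.exp (2 * (c - m * β)) := by linarith
      have h2' : Real.exp (c - m * β - 1)
          ≤ max (Real.exp (2 * (c - m * β))) (Real.exp (c - m * β - 1)) := le_max_right _ _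
      have h3' : Real.exp (2 * (c - m * β))
          ≤ max (Real.exp (2 * (c - m * β))) (Real.exp (c - m * β - 1)) := le_max_left _ _
      rw [hTdef] at hi₀
      linarith
    have hdiv : 0 ≤ s i₀ ^ 2 / lam i₀ := div_nonneg (sq_nonneg _) (hlampos i₀).le
    rcases hcase with h | h
    · -- eigenvalue big
      have hlog : 2 * (c - m * β) ≤ Real.log (lam i₀ ^ 2) := by
        rw [← Real.log_exp (2 * (c - m * β))]
        exact Real.log_le_log (Real.exp_pos _) h.le
      have : Real.log (lam i₀ ^ 2) = 2 * Real.log (lam i₀) := by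
        rw [Real.log_pow]; push_cast; ring
      rw [this] at hlog
      linarith
    · -- residual big
      have hxpos : 0 < s i₀ ^ 2 := lt_trans (Real.exp_pos _) h
      have haux := aux_log_ineq (s i₀ ^ 2) (lam i₀) hxpos (hlampos i₀)
      have hlog : c - m * β - 1 ≤ Real.log (s i₀ ^ 2) := by
        rw [← Real.log_exp (c - m * β - 1)]
        exact Real.log_le_log (Real.exp_pos _) h.le
      linarith
  -- assemble
  rw [hquad, hlogdet, ← Finset.sum_add_distrib]
  have hsplit : ∑ i, (s i ^ 2 / lam i + Real.log (lam i))
      = (s i₀ ^ 2 / lam i₀ + Real.log (lam i₀))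
        + ∑ i ∈ Finset.univ.erase i₀, (s i ^ 2 / lam i + Real.log (lam i)) := by
    rw [← Finset.add_sum_erase _ _ (Finset.mem_univ i₀)]
  have hrest : (m:ℝ) * β ≤ ∑ i ∈ Finset.univ.erase i₀, (s i ^ 2 / lam i + Real.log (lam i)) := by
    have h1' : ∑ i ∈ Finset.univ.erase i₀, β
        ≤ ∑ i ∈ Finset.univ.erase i₀, (s i ^ 2 / lam i + Real.log (lam i)) :=
      Finset.sum_le_sum fun i _ => hterm i
    have hcard : (Finset.univ.erase i₀).card = m - 1 := by
      rw [Finset.card_erase_of_mem (Finset.mem_univ i₀), Finset.card_univ, Fintype.card_fin]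
    have h2' : ∑ _i ∈ Finset.univ.erase i₀, β = ((m - 1 : ℕ) : ℝ) * β := by
      rw [Finset.sum_const, hcard, nsmul_eq_mul]
    have h3' : (m:ℝ) * β ≤ ((m - 1 : ℕ) : ℝ) * β := by
      apply mul_le_mul_of_nonpos_right _ hβ0
      exact_mod_cast Nat.sub_le m 1
    calc (m:ℝ) * β ≤ ((m - 1 : ℕ) : ℝ) * β := h3'
      _ = ∑ _i ∈ Finset.univ.erase i₀, β := h2'.symm
      _ ≤ _ := h1'
  rw [hsplit]
  linarith
end

section
/- With the setup of the trimmed covariance (w_j = 0, w_i = 1 for i ≠ j), for any residual vector r ∈ ℝⁿ, the quadratic form (√W r)ᵀ (√W Z Γ Zᵀ √W + Λ^{⊙w})⁻¹ (√W r) equals r₋ⱼᵀ ((ZΓZᵀ + Λ)₋ⱼ)⁻¹ r₋ⱼ, where the subscript −j denotes deleting the j-th entry (resp. j-th row and column). -/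
open Matrix BigOperators

/-- With the trimmed covariance setup (`w_j = 0`, `w_i = 1` for `i ≠ j`), for any
residual `r`, the quadratic form `(√W r)ᵀ (√W ZΓZᵀ√W + Λ^{⊙w})⁻¹ (√W r)` equals
the quadratic form of the deleted system `r₋ⱼᵀ ((ZΓZᵀ + Λ)₋ⱼ)⁻¹ r₋ⱼ`. -/
theorem stmt8 (n k : ℕ) (j : Fin (n + 1))
    (Z : Matrix (Fin (n + 1)) (Fin k) ℝ) (Γ : Matrix (Fin k) (Fin k) ℝ)
    (hΓ : Γ.PosSemidef) (lam : Fin (n + 1) → ℝ) (hlam : ∀ i, 0 < lam i)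
    (w : Fin (n + 1) → ℝ) (hw : w = fun i => if i = j then 0 else 1)
    (r : Fin (n + 1) → ℝ) :
    let sqrtW : Matrix (Fin (n + 1)) (Fin (n + 1)) ℝ :=
      Matrix.diagonal fun i => Real.sqrt (w i)
    let Λw : Matrix (Fin (n + 1)) (Fin (n + 1)) ℝ :=
      Matrix.diagonal fun i => (lam i) ^ (w i)
    let A : Matrix (Fin (n + 1)) (Fin (n + 1)) ℝ :=
      Z * Γ * Zᵀ + Matrix.diagonal lam
    let B : Matrix (Fin (n + 1)) (Fin (n + 1)) ℝ :=
      sqrtW * (Z * Γ * Zᵀ) * sqrtW + Λw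
    (sqrtW *ᵥ r) ⬝ᵥ (B⁻¹ *ᵥ (sqrtW *ᵥ r))
      = (r ∘ j.succAbove) ⬝ᵥ
          ((A.submatrix j.succAbove j.succAbove)⁻¹ *ᵥ (r ∘ j.succAbove)) := by
  intro sqrtW Λw A B
  classical
  subst hw
  -- positive semidefiniteness of Z Γ Zᵀ
  have hZ : (Z * Γ * Zᵀ).PosSemidef := by
    have := hΓ.mul_mul_conjTranspose_same Z
    simpa using this
  have hA : A.PosDef := Matrix.PosDef.posSemidef_add hZ (Matrix.PosDef.diagonal hlam)
  set C : Matrix (Fin n) (Fin n) ℝ := A.submatrix j.succAbove j.succAbove with hCdef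
  -- C is positive definite
  have hCpd : C.PosDef := by
    refine Matrix.PosDef.of_dotProduct_mulVec_pos (hA.isHermitian.submatrix _) fun x hx => ?_
    set y : Fin (n + 1) → ℝ := fun i => Option.elim (finSuccEquiv' j i) 0 x with hy
    have hyj : y j = 0 := by simp [hy, finSuccEquiv'_at]
    have hys : ∀ a, y (j.succAbove a) = x a := fun a => by
      simp [hy, finSuccEquiv'_succAbove]
    have hyne : y ≠ 0 := by
      obtain ⟨a, ha⟩ := Function.ne_iff.mp hx
      exact Function.ne_iff.mpr ⟨j.succAbove a, by simpa [hys] using ha⟩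
    have hpos := hA.dotProduct_mulVec_pos hyne
    have key : y ⬝ᵥ (A *ᵥ y) = x ⬝ᵥ (C *ᵥ x) := by
      simp only [dotProduct, Matrix.mulVec]
      rw [Fin.sum_univ_succAbove _ j]
      simp only [hyj, zero_mul, zero_add]
      refine Finset.sum_congr rfl fun a _ => ?_
      rw [hys]
      congr 1
      rw [Fin.sum_univ_succAbove _ j]
      simp [hyj, hys, hCdef, Matrix.submatrix_apply]
    simpa [key] using hpos
  have hCdet : IsUnit C.det := isUnit_iff_ne_zero.mpr hCpd.det_pos.ne'
  have hCinv : C * C⁻¹ = 1 := Matrix.mul_nonsing_inv _ hCdet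
  -- entries of B
  have hd : ∀ i : Fin (n + 1),
      Real.sqrt (if i = j then (0:ℝ) else 1) = if i = j then 0 else 1 := fun i => by
    split <;> simp
  have hΛ : ∀ i i' : Fin (n + 1),
      Λw i i' = if i = i' then (if i = j then 1 else lam i) else 0 := by
    intro i i'
    show Matrix.diagonal (fun i => lam i ^ ((fun i => if i = j then (0:ℝ) else 1) i)) i i' = _
    rw [Matrix.diagonal_apply]
    by_cases h : i = i' <;> by_cases hj : i = j <;>
      simp [h, hj, Real.rpow_zero, Real.rpow_one]
  have hAent : ∀ i i' : Fin (n + 1),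
      A i i' = (Z * Γ * Zᵀ) i i' + Matrix.diagonal lam i i' := fun _ _ => rfl
  have hBent : ∀ i i' : Fin (n + 1), B i i' =
      if i = j then (if i' = j then (1:ℝ) else 0)
      else if i' = j then 0 else A i i' := by
    intro i i'
    show ((Matrix.diagonal (fun i => Real.sqrt ((fun i => if i = j then (0:ℝ) else 1) i)) *
        (Z * Γ * Zᵀ)) *
        Matrix.diagonal (fun i => Real.sqrt ((fun i => if i = j then (0:ℝ) else 1) i))) i i'
        + Λw i i' = _
    rw [Matrix.mul_diagonal, Matrix.diagonal_mul, hΛ]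
    by_cases hi : i = j <;> by_cases hi' : i' = j <;>
      simp [hi, hi', hd i, hd i', hAent, Matrix.diagonal_apply] <;>
      exact fun h => hi' h.symm
  -- the candidate inverse of B
  set M : Matrix (Fin (n + 1)) (Fin (n + 1)) ℝ := fun i i' =>
    Option.elim (finSuccEquiv' j i) (if i' = j then 1 else 0)
      (fun a => Option.elim (finSuccEquiv' j i') 0 (fun b => C⁻¹ a b)) with hM
  have hMjj : ∀ i', M j i' = if i' = j then 1 else 0 := fun i' => by
    simp [hM, finSuccEquiv'_at]
  have hMsj : ∀ a, M (j.succAbove a) j = 0 := fun a => by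
    simp [hM, finSuccEquiv'_succAbove, finSuccEquiv'_at]
  have hMss : ∀ a b, M (j.succAbove a) (j.succAbove b) = C⁻¹ a b := fun a b => by
    simp [hM, finSuccEquiv'_succAbove]
  have hBM : B * M = 1 := by
    ext i i'
    rw [Matrix.mul_apply, Fin.sum_univ_succAbove _ j]
    by_cases hi : i = j
    · rw [hi]
      have h1 : B j j = 1 := by rw [hBent]; simp
      have h2 : ∀ l, B j (j.succAbove l) = 0 := fun l => by
        rw [hBent]; simp [Fin.succAbove_ne j l]
      simp [h1, h2, hMjj, Matrix.one_apply, eq_comm]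
    · obtain ⟨a, rfl⟩ := Fin.exists_succAbove_eq hi
      have h1 : B (j.succAbove a) j = 0 := by rw [hBent]; simp [hi]
      have h2 : ∀ l, B (j.succAbove a) (j.succAbove l) = A (j.succAbove a) (j.succAbove l) :=
        fun l => by rw [hBent]; simp [hi, (Fin.succAbove_ne j l : j.succAbove l ≠ j)]
      by_cases hi' : i' = j
      · rw [hi']
        simp [h1, h2, hMsj, Matrix.one_apply, hi]
      · obtain ⟨b, rfl⟩ := Fin.exists_succAbove_eq hi'
        have hsum : ∑ l, B (j.succAbove a) (j.succAbove l) * M (j.succAbove l) (j.succAbove b)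
            = (C * C⁻¹) a b := by
          rw [Matrix.mul_apply]
          refine Finset.sum_congr rfl fun l _ => ?_
          rw [h2, hMss, hCdef]; rfl
        rw [h1, zero_mul, zero_add, hsum, hCinv]
        simp [Matrix.one_apply, Fin.succAbove_right_inj]
  have hBinv : B⁻¹ = M := Matrix.inv_eq_right_inv hBM
  -- the weighted residual vector
  set s : Fin (n + 1) → ℝ := sqrtW *ᵥ r with hs
  have hsj : s j = 0 := by
    show (Matrix.diagonal (fun i => Real.sqrt ((fun i => if i = j then (0:ℝ) else 1) i)) *ᵥ r) j
      = 0
    rw [Matrix.mulVec_diagonal]; simp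
  have hss : ∀ a, s (j.succAbove a) = r (j.succAbove a) := fun a => by
    show (Matrix.diagonal (fun i => Real.sqrt ((fun i => if i = j then (0:ℝ) else 1) i)) *ᵥ r)
        (j.succAbove a) = _
    rw [Matrix.mulVec_diagonal]
    simp [(Fin.succAbove_ne j a : j.succAbove a ≠ j)]
  rw [hBinv]
  simp only [dotProduct, Matrix.mulVec, Function.comp_apply]
  rw [Fin.sum_univ_succAbove _ j]
  simp only [hsj, zero_mul, zero_add]
  refine Finset.sum_congr rfl fun a _ => ?_
  rw [hss]
  congr 1
  rw [Fin.sum_univ_succAbove _ j]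
  simp [hsj, hss, hMsj, hMss]
end

section
/- The projection of a point x ∈ ℝⁿ onto the capped simplex Δ_h = {w : 1ᵀw = h, 0 ≤ w ≤ 1} exists and is unique, and is given componentwise by proj(x)ᵢ = median(0, xᵢ − τ, 1) = min(max(xᵢ − τ, 0), 1) for some τ ∈ ℝ satisfying Σᵢ min(max(xᵢ − τ, 0), 1) = h. -/
open BigOperators

/-- The Euclidean projection onto the capped simplex `Δ_h` exists, is unique, and
is given componentwise by `proj(x)ᵢ = min (max (xᵢ − τ) 0) 1` for some `τ ∈ ℝ`
with `∑ i, min (max (xᵢ − τ) 0) 1 = h`. -/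
theorem stmt11 (n : ℕ) (h : ℝ) (h0 : 0 ≤ h) (hn : h ≤ n)
    (x : EuclideanSpace ℝ (Fin n)) :
    let Δ : Set (EuclideanSpace ℝ (Fin n)) :=
      {w | (∑ i, w i) = h ∧ ∀ i, 0 ≤ w i ∧ w i ≤ 1}
    ∃ (p : EuclideanSpace ℝ (Fin n)) (τ : ℝ),
      (p ∈ Δ ∧ ∀ q ∈ Δ, ‖p - x‖ ≤ ‖q - x‖) ∧
      (∀ q : EuclideanSpace ℝ (Fin n),
        (q ∈ Δ ∧ ∀ q' ∈ Δ, ‖q - x‖ ≤ ‖q' - x‖) → q = p) ∧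
      (∀ i, p i = min (max (x i - τ) 0) 1) ∧
      (∑ i, min (max (x i - τ) 0) 1) = h := by
  intro Δ
  -- Step 1: find τ with ∑ clamp(x i - τ) = h, by the intermediate value theorem.
  obtain ⟨τ, hτ⟩ : ∃ τ : ℝ, (∑ i, min (max (x i - τ) 0) 1) = h := by
    rcases Nat.eq_zero_or_pos n with hn0 | hn0
    · subst hn0
      refine ⟨0, ?_⟩
      have : h = 0 := le_antisymm (by simpa using hn) h0
      simp [this]
    · have hne : (Finset.univ : Finset (Fin n)).Nonempty := by
        simpa [Finset.univ_nonempty_iff] using Fin.pos_iff_nonempty.mp hn0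
      set a : ℝ := (Finset.univ.inf' hne x) - 1 with ha
      set b : ℝ := Finset.univ.sup' hne x with hb
      have hab : a ≤ b := by
        obtain ⟨i, hi⟩ := id hne
        have h1 : Finset.univ.inf' hne x ≤ x i := Finset.inf'_le x hi
        have h2 : x i ≤ Finset.univ.sup' hne x := Finset.le_sup' x hi
        simp only [ha, hb]; linarith
      set f : ℝ → ℝ := fun t => ∑ i, min (max (x i - t) 0) 1 with hf
      have hcont : Continuous f := by
        apply continuous_finset_sum
        intro i _
        exact ((continuous_const.sub continuous_id).max continuous_const).min
          continuous_const
      have hfa : f a = n := by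
        rw [hf]
        have : ∀ i : Fin n, min (max (x i - a) 0) 1 = 1 := by
          intro i
          have h1 : (1:ℝ) ≤ x i - a := by
            have h2 : Finset.univ.inf' hne x ≤ x i := Finset.inf'_le x (Finset.mem_univ i)
            simp only [ha]; linarith
          rw [max_eq_left (by linarith), min_eq_right h1]
        simp [this]
      have hfb : f b = 0 := by
        rw [hf]
        have : ∀ i : Fin n, min (max (x i - b) 0) 1 = 0 := by
          intro i
          have h1 : x i - b ≤ 0 := by
            have h2 : x i ≤ Finset.univ.sup' hne x := Finset.le_sup' x (Finset.mem_univ i)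
            simp only [hb]; linarith
          rw [max_eq_right h1, min_eq_left zero_le_one]
        simp [this]
      have := intermediate_value_Icc' hab hcont.continuousOn
      have hmem : h ∈ Set.Icc (f b) (f a) := by
        rw [hfa, hfb]; exact ⟨h0, hn⟩
      obtain ⟨τ, _, hτ⟩ := this hmem
      exact ⟨τ, hτ⟩
  -- Step 2: define p.
  set p : EuclideanSpace ℝ (Fin n) := WithLp.toLp 2 (fun i => min (max (x i - τ) 0) 1) with hp
  have hpΔ : p ∈ Δ := by
    constructor
    · exact hτ
    · intro i
      exact ⟨le_min (le_max_right _ _) zero_le_one, min_le_right _ _⟩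
  -- Step 3: variational inequality.
  have key : ∀ q ∈ Δ, 0 ≤ ∑ i, (q i - p i) * (p i - x i) := by
    intro q hq
    have hterm : ∀ i : Fin n, 0 ≤ (q i - p i) * (p i - (x i - τ)) := by
      intro i
      rcases le_or_gt (x i - τ) 0 with hc | hc
      · have hpi : p i = 0 := by
          rw [hp]; simp only
          rw [max_eq_right hc, min_eq_left zero_le_one]
        rw [hpi]
        have := (hq.2 i).1
        nlinarith
      · rcases le_or_gt 1 (x i - τ) with hc1 | hc1
        · have hpi : p i = 1 := by
            rw [hp]; simp only
            rw [max_eq_left (by linarith), min_eq_right hc1]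
          rw [hpi]
          have := (hq.2 i).2
          nlinarith
        · have hpi : p i = x i - τ := by
            rw [hp]; simp only
            rw [max_eq_left hc.le, min_eq_left hc1.le]
          rw [hpi]
          ring_nf
          nlinarith
    have hsum0 : ∑ i, (q i - p i) = 0 := by
      rw [Finset.sum_sub_distrib, hq.1, hpΔ.1, sub_self]
    have : ∑ i, (q i - p i) * (p i - x i)
        = ∑ i, (q i - p i) * (p i - (x i - τ)) - τ * ∑ i, (q i - p i) := by
      rw [Finset.mul_sum, ← Finset.sum_sub_distrib]
      congr 1; ext i; ring
    rw [this, hsum0, mul_zero, sub_zero]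
    exact Finset.sum_nonneg fun i _ => hterm i
  -- inner product identity
  have hinner : ∀ q : EuclideanSpace ℝ (Fin n),
      (inner ℝ (q - p) (p - x) : ℝ) = ∑ i, (q i - p i) * (p i - x i) := by
    intro q
    simp [PiLp.inner_apply, RCLike.inner_apply, mul_comm]
  have hexp : ∀ q : EuclideanSpace ℝ (Fin n),
      ‖q - x‖ ^ 2 = ‖q - p‖ ^ 2 + 2 * (inner ℝ (q - p) (p - x) : ℝ) + ‖p - x‖ ^ 2 := by
    intro q
    have : q - x = (q - p) + (p - x) := by abel
    rw [this, norm_add_sq_real]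
  have hmin : ∀ q ∈ Δ, ‖p - x‖ ≤ ‖q - x‖ := by
    intro q hq
    have h1 := key q hq
    rw [← hinner] at h1
    have h2 := hexp q
    nlinarith [norm_nonneg (q - p), norm_nonneg (p - x), norm_nonneg (q - x)]
  refine ⟨p, τ, ⟨hpΔ, hmin⟩, ?_, fun i => rfl, hτ⟩
  intro q ⟨hqΔ, hqmin⟩
  have heq : ‖q - x‖ = ‖p - x‖ := le_antisymm (hqmin p hpΔ) (hmin q hqΔ)
  have h1 := key q hqΔ
  rw [← hinner] at h1
  have h2 := hexp q
  have heq2 : ‖q - x‖ ^ 2 = ‖p - x‖ ^ 2 := by rw [heq]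
  have h3 : ‖q - p‖ ^ 2 ≤ 0 := by linarith
  have h4 : ‖q - p‖ = 0 := by nlinarith [norm_nonneg (q - p)]
  have := norm_sub_eq_zero_iff.mp h4
  exact this
end
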